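/- arXiv:1406.2636 — 5 statements merged into one kernel-verified Lean document; each statement's English description precedes it below -/
import Mathlib

section
/- Every simple graph that admits a segment representation admits a segment representation in which all segments are nondegenerate and no two distinct segments lie on a common line. -/
/-- The segment in the plane with the given pair of endpoints. -/
def segOf (e : (ℝ × ℝ) × (ℝ × ℝ)) : Set (ℝ × ℝ) := segment ℝ e.1 e.2

/-- `f` (given by endpoint pairs) is a segment representation of `G`. -/
def IsSegRep {V : Type*} (G : SimpleGraph V) (f : V → (ℝ × ℝ) × (ℝ × ℝ)) : Prop :=
  ∀ u v : V, u ≠ v → ((segOf (f u) ∩ segOf (f v)).Nonempty ↔ G.Adj u v)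

/-- `G` is a segment graph. -/
def IsSegGraph {V : Type*} (G : SimpleGraph V) : Prop := ∃ f, IsSegRep G f

namespace SegAux

abbrev Pt := ℝ × ℝ
def d2 (x y : Pt) : ℝ := x.1 * y.2 - x.2 * y.1
def ip (x y : Pt) : ℝ := x.1 * y.1 + x.2 * y.2
def rot (x : Pt) : Pt := (-x.2, x.1)
def dir (e : Pt × Pt) : Pt := e.2 - e.1
def sameLine (e e' : Pt × Pt) : Prop :=
  d2 (dir e) (dir e') = 0 ∧ d2 (dir e) (e'.1 - e.1) = 0

lemma d2_self (x : Pt) : d2 x x = 0 := by simp [d2]; ring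
lemma d2_zero_right (x : Pt) : d2 x 0 = 0 := by simp [d2]
lemma d2_comm (x y : Pt) : d2 x y = -d2 y x := by simp [d2]; ring
lemma d2_smul_right (s : ℝ) (x y : Pt) : d2 x (s • y) = s * d2 x y := by
  simp [d2, Prod.smul_def]; ring
lemma d2_smul_left (s : ℝ) (x y : Pt) : d2 (s • x) y = s * d2 x y := by
  simp [d2, Prod.smul_def]; ring
lemma d2_add_right (x y z : Pt) : d2 x (y + z) = d2 x y + d2 x z := by simp [d2]; ring
lemma d2_neg_right (x y : Pt) : d2 x (-y) = -d2 x y := by simp [d2]; ring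

lemma par_of_d2 {w z : Pt} (h : d2 w z = 0) (hw : w ≠ 0) : ∃ s : ℝ, z = s • w := by
  have hd : w.1 * z.2 - w.2 * z.1 = 0 := h
  rcases eq_or_ne w.1 0 with h1 | h1
  · have h2 : w.2 ≠ 0 := by intro h2; exact hw (Prod.ext h1 h2)
    refine ⟨z.2 / w.2, Prod.ext ?_ ?_⟩ <;> simp [Prod.smul_def]
    · field_simp; nlinarith
    · field_simp
  · refine ⟨z.1 / w.1, Prod.ext ?_ ?_⟩ <;> simp [Prod.smul_def]
    · field_simp
    · field_simp; nlinarith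

lemma smul_ne_zero_iff' {s : ℝ} {x : Pt} (hx : x ≠ 0) : s • x ≠ 0 ↔ s ≠ 0 := by
  constructor
  · intro h hs; exact h (by rw [hs, zero_smul])
  · intro hs h
    apply hx
    have := congrArg (fun y => s⁻¹ • y) h
    simpa [smul_smul, inv_mul_cancel₀ hs] using this

lemma sameLine_refl (e : Pt × Pt) : sameLine e e := ⟨d2_self _, by simp [d2]⟩

lemma sameLine_symm {e e' : Pt × Pt} (he : dir e ≠ 0) (he' : dir e' ≠ 0)
    (h : sameLine e e') : sameLine e' e := by
  obtain ⟨hpar, hpt⟩ := h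
  obtain ⟨μ, hμ⟩ := par_of_d2 hpar he
  have hμ0 : μ ≠ 0 := by
    intro h0; rw [h0, zero_smul] at hμ; exact he' hμ
  constructor
  · rw [hμ, d2_smul_left, d2_self]; ring
  · have h1 : e.1 - e'.1 = -(e'.1 - e.1) := by abel
    rw [hμ, d2_smul_left, h1, d2_neg_right, hpt]; ring

lemma sameLine_trans {e e' e'' : Pt × Pt} (he : dir e ≠ 0) (he' : dir e' ≠ 0)
    (h1 : sameLine e e') (h2 : sameLine e' e'') : sameLine e e'' := by
  obtain ⟨hpar1, hpt1⟩ := h1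
  obtain ⟨hpar2, hpt2⟩ := h2
  obtain ⟨μ, hμ⟩ := par_of_d2 hpar1 he
  have hμ0 : μ ≠ 0 := fun h0 => he' (by rw [hμ, h0, zero_smul])
  have hpar2' : d2 (dir e) (dir e'') = 0 := by
    have : μ * d2 (dir e) (dir e'') = 0 := by
      rw [← d2_smul_left, ← hμ]; exact hpar2
    exact (mul_eq_zero.1 this).resolve_left hμ0
  have hpt2' : d2 (dir e) (e''.1 - e'.1) = 0 := by
    have : μ * d2 (dir e) (e''.1 - e'.1) = 0 := by
      rw [← d2_smul_left, ← hμ]; exact hpt2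
    exact (mul_eq_zero.1 this).resolve_left hμ0
  refine ⟨hpar2', ?_⟩
  have : e''.1 - e.1 = (e''.1 - e'.1) + (e'.1 - e.1) := by abel
  rw [this, d2_add_right, hpt2', hpt1]; ring

lemma sameLine_of_collinear {e e' : Pt × Pt}
    (h : Collinear ℝ ({e.1, e.2, e'.1, e'.2} : Set Pt)) : sameLine e e' := by
  have hmem : e.1 ∈ ({e.1, e.2, e'.1, e'.2} : Set Pt) := by simp
  rw [collinear_iff_of_mem hmem] at h
  obtain ⟨v, hv⟩ := h
  obtain ⟨r1, hr1⟩ := hv e.2 (by simp)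
  obtain ⟨r2, hr2⟩ := hv e'.1 (by simp)
  obtain ⟨r3, hr3⟩ := hv e'.2 (by simp)
  have h1 : dir e = r1 • v := by
    simp only [dir, hr1, vadd_eq_add]; abel
  have h2 : e'.1 - e.1 = r2 • v := by
    simp only [hr2, vadd_eq_add]; abel
  have h3 : dir e' = (r3 - r2) • v := by
    simp only [dir, hr3, hr2, vadd_eq_add, sub_smul]; abel
  constructor
  · rw [h1, h3, d2_smul_left, d2_smul_right, d2_self]; ring
  · rw [h1, h2, d2_smul_left, d2_smul_right, d2_self]; ring

noncomputable def nu (d : Pt) : Pt := if d.1 = 0 then (0, 1) else (1, d.2 / d.1)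

noncomputable def unit (d : Pt) : Pt := (Real.sqrt (ip (nu d) (nu d)))⁻¹ • nu d

lemma ip_nu_pos (d : Pt) : 0 < ip (nu d) (nu d) := by
  rcases eq_or_ne d.1 0 with h | h <;> simp [nu, h, ip]
  nlinarith [sq_nonneg (d.2 / d.1)]

lemma ip_smul_smul (s : ℝ) (x y : Pt) : ip (s • x) (s • y) = s ^ 2 * ip x y := by
  simp [ip, Prod.smul_def]; ring

lemma d2_nu (d : Pt) : d2 d (nu d) = 0 := by
  rcases eq_or_ne d.1 0 with h | h
  · simp [nu, h, d2]
  · simp only [nu, h, if_false, d2]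
    field_simp
    ring

lemma ip_unit_self (d : Pt) : ip (unit d) (unit d) = 1 := by
  have h := ip_nu_pos d
  rw [unit, ip_smul_smul]
  rw [← Real.sqrt_inv, Real.sq_sqrt (by positivity)]
  field_simp

lemma d2_unit (d : Pt) : d2 d (unit d) = 0 := by
  rw [unit, d2_smul_right, d2_nu]; ring

lemma unit_ne_zero (d : Pt) : unit d ≠ 0 := by
  intro h
  have := ip_unit_self d
  rw [h] at this; simp [ip] at this

lemma nu_eq_of_par {d d' : Pt} (hd : d ≠ 0) (hd' : d' ≠ 0) (h : d2 d d' = 0) :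
    nu d' = nu d := by
  obtain ⟨μ, hμ⟩ := par_of_d2 h hd
  have hμ0 : μ ≠ 0 := fun h0 => hd' (by rw [hμ, h0, zero_smul])
  have h1 : d'.1 = μ * d.1 := by rw [hμ]; rfl
  have h2 : d'.2 = μ * d.2 := by rw [hμ]; rfl
  rcases eq_or_ne d.1 0 with hc | hc
  · have : d'.1 = 0 := by rw [h1, hc]; ring
    simp [nu, hc, this]
  · have : d'.1 ≠ 0 := by rw [h1]; exact mul_ne_zero hμ0 hc
    simp only [nu, hc, this, if_false]
    have : d'.2 / d'.1 = d.2 / d.1 := by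
      rw [h1, h2, mul_div_mul_left _ _ hμ0]
    rw [this]

lemma unit_eq_of_par {d d' : Pt} (hd : d ≠ 0) (hd' : d' ≠ 0) (h : d2 d d' = 0) :
    unit d' = unit d := by rw [unit, unit, nu_eq_of_par hd hd' h]



lemma mem_segOf {A B x : Pt} : x ∈ segOf (A, B) ↔ ∃ t ∈ Set.Icc (0:ℝ) 1, x = A + t • (B - A) := by
  rw [segOf, segment_eq_image']
  constructor
  · rintro ⟨t, ht, rfl⟩; exact ⟨t, ht, rfl⟩
  · rintro ⟨t, ht, rfl⟩; exact ⟨t, ht, rfl⟩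

def Str (A B C D : Pt) : Prop := d2 (B - A) (C - A) * d2 (B - A) (D - A) < 0
def PC (e e' : Pt × Pt) : Prop := Str e.1 e.2 e'.1 e'.2 ∧ Str e'.1 e'.2 e.1 e.2

lemma d2_sub_right (x y z : Pt) : d2 x (y - z) = d2 x y - d2 x z := by simp [d2]; ring
lemma frac_bounds {a b : ℝ} (h : a * b < 0) : 0 ≤ a / (a - b) ∧ a / (a - b) ≤ 1 := by
  rcases lt_or_gt_of_ne (fun h0 : a = 0 => by rw [h0] at h; simp at h) with ha | ha
  · have hb : 0 < b := by nlinarith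
    have hd : a - b < 0 := by linarith
    have : a / (a - b) = (-a) / (b - a) := by rw [div_eq_div_iff (by linarith) (by linarith)]; ring
    rw [this]
    constructor
    · exact div_nonneg (by linarith) (by linarith)
    · rw [div_le_one (by linarith)]; linarith
  · have hb : b < 0 := by nlinarith
    have hd : 0 < a - b := by linarith
    constructor
    · exact div_nonneg (by linarith) (by linarith)
    · rw [div_le_one hd]; linarith

lemma PC_inter {A B C D : Pt} (h : PC (A, B) (C, D)) :
    (segOf (A, B) ∩ segOf (C, D)).Nonempty := by
  obtain ⟨hstr1, hstr2⟩ := h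
  have hstr1 : d2 (B - A) (C - A) * d2 (B - A) (D - A) < 0 := hstr1
  have hstr2 : d2 (D - C) (A - C) * d2 (D - C) (B - C) < 0 := hstr2
  set gC := d2 (B - A) (C - A) with hgC
  set gD := d2 (B - A) (D - A) with hgD
  set h0 := d2 (D - C) (A - C) with hh0
  set h1' := d2 (D - C) (B - C) with hh1
  have hgCne : gC ≠ 0 := fun h => by rw [h] at hstr1; simp at hstr1
  have hh0ne : h0 ≠ 0 := fun h => by rw [h] at hstr2; simp at hstr2
  have hBA : B - A ≠ 0 := fun h => hgCne (by rw [hgC, h]; simp [d2])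
  have hden : gC - gD ≠ 0 := fun h => by
    have : gC = gD := by linarith
    rw [this] at hstr1; nlinarith
  have hden2 : h0 - h1' ≠ 0 := fun h => by
    have : h0 = h1' := by linarith
    rw [this] at hstr2; nlinarith
  obtain ⟨ht0, ht1⟩ := frac_bounds hstr1
  set t := gC / (gC - gD) with hts
  have heqt : gC + t * (gD - gC) = 0 := by
    rw [hts]; field_simp; ring
  set P := C + t • (D - C) with hP
  have hPA : P - A = (C - A) + t • (D - C) := by rw [hP]; abel
  have hDCsplit : d2 (B - A) (D - C) = gD - gC := by
    rw [hgD, hgC, ← d2_sub_right]; congr 1; abel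
  have hPd : d2 (B - A) (P - A) = 0 := by
    rw [hPA, d2_add_right, d2_smul_right, hDCsplit, ← hgC]; linarith
  obtain ⟨s, hs⟩ := par_of_d2 hPd hBA
  have hPC2 : d2 (D - C) (P - C) = 0 := by
    have : P - C = t • (D - C) := by rw [hP]; abel
    rw [this, d2_smul_right, d2_self]; ring
  have hPCsplit : P - C = (A - C) + s • (B - A) := by
    have : P = A + s • (B - A) := by rw [← hs]; abel
    rw [this]; abel
  have hBAsplit : d2 (D - C) (B - A) = h1' - h0 := by
    rw [hh1, hh0, ← d2_sub_right]; congr 1; abel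
  have hseq : h0 + s * (h1' - h0) = 0 := by
    have h' := hPC2
    rw [hPCsplit, d2_add_right, d2_smul_right, hBAsplit] at h'
    linarith [h']
  have hsval : s = h0 / (h0 - h1') := by
    rw [eq_div_iff hden2]; nlinarith [hseq]
  obtain ⟨hs0, hs1⟩ := frac_bounds hstr2
  rw [← hsval] at hs0 hs1
  refine ⟨P, ?_, ?_⟩
  · rw [mem_segOf]
    exact ⟨s, ⟨hs0, hs1⟩, by rw [← hs]; abel⟩
  · rw [mem_segOf]
    exact ⟨t, ⟨ht0, ht1⟩, rfl⟩



lemma lt_zero_stable {f : Pt × Pt → ℝ} (hf : Continuous f) {x0 : Pt × Pt} (h : f x0 < 0) :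
    ∃ ε > 0, ∀ x, dist x x0 < ε → f x < 0 := by
  have ho : IsOpen {x : Pt × Pt | f x < 0} := isOpen_lt hf continuous_const
  rcases Metric.isOpen_iff.1 ho x0 h with ⟨ε, hε, hb⟩
  exact ⟨ε, hε, fun x hx => hb hx⟩

lemma pc_stable {A B C D : Pt} (h : PC (A, B) (C, D)) :
    ∃ ε > 0, ∀ A' B', dist A' A < ε → dist B' B < ε → PC (A', B') (C, D) := by
  have hF : Continuous fun x : Pt × Pt => d2 (x.2 - x.1) (C - x.1) * d2 (x.2 - x.1) (D - x.1) := by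
    simp only [d2]; fun_prop
  have hG : Continuous fun x : Pt × Pt => d2 (D - C) (x.1 - C) * d2 (D - C) (x.2 - C) := by
    simp only [d2]; fun_prop
  obtain ⟨ε1, hε1, h1⟩ := lt_zero_stable hF h.1
  obtain ⟨ε2, hε2, h2⟩ := lt_zero_stable hG h.2
  refine ⟨min ε1 ε2, lt_min hε1 hε2, fun A' B' hA hB => ?_⟩
  have hd : ∀ ε', ε1 ≤ ε' ∨ ε2 ≤ ε' → min ε1 ε2 ≤ ε' := fun _ h =>
    h.elim (le_trans (min_le_left _ _)) (le_trans (min_le_right _ _))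
  have hdist : dist ((A', B') : Pt × Pt) (A, B) < min ε1 ε2 := by
    rw [Prod.dist_eq]; exact max_lt hA hB
  exact ⟨h1 _ (lt_of_lt_of_le hdist (min_le_left _ _)),
         h2 _ (lt_of_lt_of_le hdist (min_le_right _ _))⟩

lemma isCompact_segOf (e : Pt × Pt) : IsCompact (segOf e) := by
  rw [segOf, ← convexHull_pair]
  exact Set.Finite.isCompact_convexHull ℝ (Set.toFinite _)

lemma sep_of_disjoint {e e' : Pt × Pt} (h : Disjoint (segOf e) (segOf e')) :
    ∃ ρ > 0, ∀ x ∈ segOf e, ∀ y ∈ segOf e', ρ ≤ dist x y := by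
  have hK : IsCompact (segOf e ×ˢ segOf e') := (isCompact_segOf e).prod (isCompact_segOf e')
  have hne : (segOf e ×ˢ segOf e').Nonempty :=
    ⟨(e.1, e'.1), ⟨left_mem_segment _ _ _, left_mem_segment _ _ _⟩⟩
  obtain ⟨⟨x0, y0⟩, hmem, hmin⟩ := hK.exists_isMinOn hne
    (continuous_dist.continuousOn : ContinuousOn (fun p : Pt × Pt => dist p.1 p.2) _)
  refine ⟨dist x0 y0, ?_, fun x hx y hy => hmin (Set.mk_mem_prod hx hy)⟩
  rw [gt_iff_lt, dist_pos]
  intro hxy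
  exact Set.disjoint_left.1 h hmem.1 (hxy ▸ hmem.2)

lemma seg_close {A B A' B' : Pt} {r : ℝ} (hA : dist A' A ≤ r) (hB : dist B' B ≤ r) :
    ∀ x ∈ segOf (A', B'), ∃ y ∈ segOf (A, B), dist x y ≤ r := by
  intro x hx
  rw [segOf, segment_eq_image] at hx
  obtain ⟨t, ⟨ht0, ht1⟩, rfl⟩ := hx
  refine ⟨(1 - t) • A + t • B, by rw [segOf, segment_eq_image]; exact ⟨t, ⟨ht0, ht1⟩, rfl⟩, ?_⟩
  have : (1 - t) • A' + t • B' - ((1 - t) • A + t • B) = (1 - t) • (A' - A) + t • (B' - B) := by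
    module
  rw [dist_eq_norm, this]
  calc ‖(1 - t) • (A' - A) + t • (B' - B)‖ ≤ ‖(1 - t) • (A' - A)‖ + ‖t • (B' - B)‖ := norm_add_le _ _
    _ = (1 - t) * ‖A' - A‖ + t * ‖B' - B‖ := by
        rw [norm_smul, norm_smul, Real.norm_eq_abs, Real.norm_eq_abs,
          abs_of_nonneg (by linarith), abs_of_nonneg ht0]
    _ ≤ (1 - t) * r + t * r := by
        have h1 : ‖A' - A‖ ≤ r := by rw [← dist_eq_norm]; exact hA
        have h2 : ‖B' - B‖ ≤ r := by rw [← dist_eq_norm]; exact hB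
        have := dist_nonneg.trans hA
        nlinarith
    _ = r := by ring

lemma disjoint_from_sep {s s' t : Set Pt} {ρ : ℝ}
    (hsep : ∀ x ∈ s, ∀ y ∈ t, ρ ≤ dist x y)
    (hclose : ∀ x ∈ s', ∃ y ∈ s, dist x y < ρ) : Disjoint s' t := by
  rw [Set.disjoint_left]
  intro z hz hzt
  obtain ⟨y, hy, hd⟩ := hclose z hz
  have := hsep y hy z hzt
  rw [dist_comm] at this
  linarith



lemma d2_rot_self (x : Pt) : d2 x (rot x) = ip x x := by
  simp [d2, rot, ip]

lemma d2_combo (a b c d : ℝ) (u n : Pt) :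
    d2 (a • u + b • n) (c • u + d • n) = (a * d - b * c) * d2 u n := by
  simp [d2, Prod.smul_def]; ring

lemma ip_sub_left (x y z : Pt) : ip (x - y) z = ip x z - ip y z := by simp [ip]; ring
lemma ip_smul_left (s : ℝ) (x y : Pt) : ip (s • x) y = s * ip x y := by
  simp [ip, Prod.smul_def]; ring

lemma min_max_pos {x y p : ℝ} (h1 : min x y < p) (h2 : p < max x y) :
    (x - p) * (y - p) < 0 := by
  rcases le_total x y with h | h
  · rw [min_eq_left h] at h1; rw [max_eq_right h] at h2; nlinarith
  · rw [min_eq_right h] at h1; rw [max_eq_left h] at h2; nlinarith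

lemma core_pc {A B C D u : Pt} (hu : ip u u = 1)
    {μ γ lam : ℝ} (hμ : μ ≠ 0) (hlam : lam ≠ 0)
    (hAB : B - A = μ • u) (hCA : C - A = γ • u) (hDC : D - C = lam • u)
    {p δ : ℝ} (hδ : δ ≠ 0)
    (hpv : (ip A u - p) * (ip B u - p) < 0)
    (hpw : (ip C u - p) * (ip D u - p) < 0) :
    PC (A + (δ * (ip A u - p)) • rot u, B + (δ * (ip B u - p)) • rot u) (C, D) := by
  set n := rot u with hn
  have hd2un : d2 u n = 1 := by rw [hn, d2_rot_self, hu]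
  have hαBA : ip B u - ip A u = μ := by
    have : ip (B - A) u = μ * ip u u := by rw [hAB, ip_smul_left]
    rw [ip_sub_left] at this; rw [this, hu]; ring
  have hαCA : ip C u - ip A u = γ := by
    have : ip (C - A) u = γ * ip u u := by rw [hCA, ip_smul_left]
    rw [ip_sub_left] at this; rw [this, hu]; ring
  have hαDC : ip D u - ip C u = lam := by
    have : ip (D - C) u = lam * ip u u := by rw [hDC, ip_smul_left]
    rw [ip_sub_left] at this; rw [this, hu]; ring
  set A' : Pt := A + (δ * (ip A u - p)) • n with hA'
  set B' : Pt := B + (δ * (ip B u - p)) • n with hB'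
  have hBA' : B' - A' = μ • u + (δ * μ) • n := by
    rw [hA', hB', ← hAB]
    have hs : δ * (ip B u - p) = δ * (ip A u - p) + δ * μ := by rw [← hαBA]; ring
    rw [hs]; module
  have hCA' : C - A' = γ • u + (-(δ * (ip A u - p))) • n := by
    rw [hA', ← hCA]; module
  have hDA' : D - A' = (γ + lam) • u + (-(δ * (ip A u - p))) • n := by
    have : D - A = (γ + lam) • u := by
      have : D - A = (D - C) + (C - A) := by abel
      rw [this, hDC, hCA]; module
    rw [hA', ← this]; module
  have hAC' : A' - C = (-γ) • u + (δ * (ip A u - p)) • n := by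
    rw [hA']
    have : A - C = (-γ) • u := by rw [← neg_smul_neg]; simp; rw [← hCA]; abel
    rw [← this]; module
  have hBC' : B' - C = (μ - γ) • u + (δ * (ip B u - p)) • n := by
    rw [hB']
    have : B - C = (μ - γ) • u := by
      have h2 : B - C = (B - A) - (C - A) := by abel
      rw [h2, hAB, hCA]; module
    rw [← this]; module
  have hDCc : D - C = lam • u + (0:ℝ) • n := by rw [hDC]; module
  constructor
  · show d2 (B' - A') (C - A') * d2 (B' - A') (D - A') < 0
    rw [hBA', hCA', hDA', d2_combo, d2_combo, hd2un, mul_one, mul_one]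
    have e1 : μ * -(δ * (ip A u - p)) - δ * μ * γ = -(μ * δ) * (ip C u - p) := by
      rw [← hαCA]; ring
    have e2 : μ * -(δ * (ip A u - p)) - δ * μ * (γ + lam) = -(μ * δ) * (ip D u - p) := by
      have : ip D u = ip A u + γ + lam := by rw [← hαDC, ← hαCA]; ring
      rw [this]; ring
    rw [e1, e2]
    have hpos : 0 < (μ * δ) ^ 2 := by positivity
    nlinarith
  · show d2 (D - C) (A' - C) * d2 (D - C) (B' - C) < 0
    rw [hDCc, hAC', hBC', d2_combo, d2_combo, hd2un, mul_one, mul_one]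
    have e1 : lam * (δ * (ip A u - p)) - 0 * -γ = (lam * δ) * (ip A u - p) := by ring
    have e2 : lam * (δ * (ip B u - p)) - 0 * (μ - γ) = (lam * δ) * (ip B u - p) := by ring
    rw [e1, e2]
    have hpos : 0 < (lam * δ) ^ 2 := by positivity
    nlinarith



lemma mem_segOfE {e : Pt × Pt} {x : Pt} :
    x ∈ segOf e ↔ ∃ t ∈ Set.Icc (0:ℝ) 1, x = e.1 + t • (e.2 - e.1) := by
  rw [segOf, segment_eq_image']
  constructor
  · rintro ⟨t, ht, rfl⟩; exact ⟨t, ht, rfl⟩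
  · rintro ⟨t, ht, rfl⟩; exact ⟨t, ht, rfl⟩

lemma mem_openSegOf {A B x : Pt} :
    x ∈ openSegment ℝ A B ↔ ∃ t ∈ Set.Ioo (0:ℝ) 1, x = A + t • (B - A) := by
  rw [openSegment_eq_image']
  constructor
  · rintro ⟨t, ht, rfl⟩; exact ⟨t, ht, rfl⟩
  · rintro ⟨t, ht, rfl⟩; exact ⟨t, ht, rfl⟩

lemma exists_pos_le_finset {β : Type*} (s : Finset β) (F : β → ℝ) (hF : ∀ b, 0 < F b) :
    ∃ δ > 0, ∀ b ∈ s, δ ≤ F b := by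
  classical
  induction s using Finset.cons_induction with
  | empty => exact ⟨1, one_pos, by simp⟩
  | cons a s ha ih =>
    obtain ⟨δ, hδ, h⟩ := ih
    refine ⟨min δ (F a), lt_min hδ (hF a), ?_⟩
    intro b hb
    rcases Finset.mem_cons.1 hb with rfl | hb
    · exact min_le_right _ _
    · exact le_trans (min_le_left _ _) (h b hb)

variable {V : Type*} [Fintype V]

lemma phaseA (G : SimpleGraph V) (f : V → Pt × Pt) (hf : IsSegRep G f) :
    ∃ g : V → Pt × Pt, IsSegRep G g ∧ (∀ v, dir (g v) ≠ 0) ∧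
      (∀ u v : V, u ≠ v → G.Adj u v →
        ∃ q, q ∈ openSegment ℝ (g u).1 (g u).2 ∧ q ∈ openSegment ℝ (g v).1 (g v).2) := by
  classical
  have hsep : ∀ p : V × V, ∃ δ : ℝ, 0 < δ ∧ ((p.1 ≠ p.2 ∧ ¬G.Adj p.1 p.2) →
      Disjoint (Metric.thickening δ (segOf (f p.1))) (Metric.thickening δ (segOf (f p.2)))) := by
    intro p
    by_cases hp : p.1 ≠ p.2 ∧ ¬G.Adj p.1 p.2
    · have hd : Disjoint (segOf (f p.1)) (segOf (f p.2)) := by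
        rw [Set.disjoint_iff_inter_eq_empty, ← Set.not_nonempty_iff_eq_empty]
        intro hne; exact hp.2 ((hf _ _ hp.1).1 hne)
      obtain ⟨δ, hδ, hdis⟩ := hd.exists_thickenings (isCompact_segOf _) (isCompact_segOf _).isClosed
      exact ⟨δ, hδ, fun _ => hdis⟩
    · exact ⟨1, one_pos, fun h => absurd h hp⟩
  choose δf hδpos hδdis using hsep
  obtain ⟨Δ, hΔ, hΔle⟩ := exists_pos_le_finset (Finset.univ : Finset (V × V)) δf hδpos
  set d' : V → Pt := fun v => if (f v).1 = (f v).2 then (1, 0) else dir (f v) with hd'def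
  set η : V → ℝ := fun v => Δ / (2 * ‖d' v‖ + 1) with hηdef
  set g : V → Pt × Pt := fun v => ((f v).1 - η v • d' v, (f v).2 + η v • d' v) with hgdef
  have hd'ne : ∀ v, d' v ≠ 0 := by
    intro v
    rw [hd'def]
    dsimp only
    split
    · intro h; simpa using congrArg Prod.fst h
    · next h => exact sub_ne_zero.2 (Ne.symm h)
  have hηpos : ∀ v, 0 < η v := fun v => div_pos hΔ (by positivity)
  have hηsmall : ∀ v, η v * ‖d' v‖ < Δ := by
    intro v
    rw [hηdef]
    dsimp only
    rw [div_mul_eq_mul_div, div_lt_iff₀ (by positivity)]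
    nlinarith [norm_nonneg (d' v), hΔ]
  have key1 : ∀ v, ∀ x ∈ segOf (g v), ∃ y ∈ segOf (f v), dist x y < Δ := by
    intro v x hx
    rw [mem_segOfE] at hx
    obtain ⟨t, ⟨ht0, ht1⟩, rfl⟩ := hx
    refine ⟨(f v).1 + t • ((f v).2 - (f v).1), mem_segOfE.2 ⟨t, ⟨ht0, ht1⟩, rfl⟩, ?_⟩
    have hsplit : (g v).1 + t • ((g v).2 - (g v).1)
        - ((f v).1 + t • ((f v).2 - (f v).1)) = (2*t - 1) • (η v • d' v) := by
      show (f v).1 - η v • d' v + t • ((f v).2 + η v • d' v - ((f v).1 - η v • d' v))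
        - ((f v).1 + t • ((f v).2 - (f v).1)) = (2*t - 1) • (η v • d' v)
      module
    rw [dist_eq_norm, hsplit, norm_smul, norm_smul]
    have h1 : |2*t - 1| ≤ 1 := abs_le.2 ⟨by linarith, by linarith⟩
    have h2 : ‖η v‖ = η v := by
      rw [Real.norm_eq_abs, abs_of_pos (hηpos v)]
    rw [h2, Real.norm_eq_abs]
    calc |2*t-1| * (η v * ‖d' v‖) ≤ 1 * (η v * ‖d' v‖) := by
          apply mul_le_mul_of_nonneg_right h1
          positivity
      _ < Δ := by rw [one_mul]; exact hηsmall v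
  have key2 : ∀ v, ∀ x ∈ segOf (f v), x ∈ openSegment ℝ (g v).1 (g v).2 := by
    intro v x hx
    rw [mem_segOfE] at hx
    obtain ⟨t, ⟨ht0, ht1⟩, rfl⟩ := hx
    rw [mem_openSegOf]
    by_cases hAB : (f v).1 = (f v).2
    · refine ⟨1/2, ⟨by norm_num, by norm_num⟩, ?_⟩
      show (f v).1 + t • ((f v).2 - (f v).1)
        = (f v).1 - η v • d' v + (1/2 : ℝ) • ((f v).2 + η v • d' v - ((f v).1 - η v • d' v))
      rw [← hAB]
      module
    · have hden : (0:ℝ) < 1 + 2 * η v := by have := hηpos v; linarith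
      refine ⟨(t + η v) / (1 + 2 * η v), ⟨?_, ?_⟩, ?_⟩
      · exact div_pos (by have := hηpos v; linarith) hden
      · rw [div_lt_one hden]; have := hηpos v; linarith
      · show (f v).1 + t • ((f v).2 - (f v).1)
          = (f v).1 - η v • d' v + ((t + η v)/(1 + 2*η v)) • ((f v).2 + η v • d' v - ((f v).1 - η v • d' v))
        have hd'v : d' v = dir (f v) := by rw [hd'def]; simp [hAB]
        rw [hd'v, dir]
        have hne : (1:ℝ) + 2 * η v ≠ 0 := ne_of_gt hden
        have hne2 : (1:ℝ) + η v * 2 ≠ 0 := ne_of_gt (by linarith)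
        match_scalars <;> field_simp <;> ring
  have hsub : ∀ v, segOf (g v) ⊆ Metric.thickening Δ (segOf (f v)) := by
    intro v x hx
    obtain ⟨y, hy, hdist⟩ := key1 v x hx
    exact Metric.mem_thickening_iff.2 ⟨y, hy, hdist⟩
  refine ⟨g, ?_, ?_, ?_⟩
  · intro u v huv
    constructor
    · intro hne
      by_contra hadj
      have hdis := hδdis (u, v) ⟨huv, hadj⟩
      have hdis2 : Disjoint (Metric.thickening Δ (segOf (f u))) (Metric.thickening Δ (segOf (f v))) :=
        hdis.mono (Metric.thickening_mono (hΔle (u,v) (Finset.mem_univ _)) _)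
          (Metric.thickening_mono (hΔle (u,v) (Finset.mem_univ _)) _)
      obtain ⟨q, hq1, hq2⟩ := hne
      exact Set.disjoint_left.1 hdis2 (hsub u hq1) (hsub v hq2)
    · intro hadj
      obtain ⟨q, hq1, hq2⟩ := (hf u v huv).2 hadj
      exact ⟨q, openSegment_subset_segment _ _ _ (key2 u q hq1),
        openSegment_subset_segment _ _ _ (key2 v q hq2)⟩
  · intro v
    have : dir (g v) = dir (f v) + (2 * η v) • d' v := by
      show (f v).2 + η v • d' v - ((f v).1 - η v • d' v) = (f v).2 - (f v).1 + (2 * η v) • d' v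
      module
    rw [this]
    by_cases hAB : (f v).1 = (f v).2
    · have h0 : dir (f v) = 0 := by rw [dir, hAB, sub_self]
      rw [h0, zero_add]
      intro h
      rcases smul_eq_zero.1 h with h | h
      · have := hηpos v; linarith [h]
      · exact hd'ne v h
    · have hd'v : d' v = dir (f v) := by rw [hd'def]; simp [hAB]
      rw [hd'v]
      have : dir (f v) + (2 * η v) • dir (f v) = (1 + 2 * η v) • dir (f v) := by module
      rw [this]
      intro h
      rcases smul_eq_zero.1 h with h | h
      · have := hηpos v; linarith [h]
      · exact (sub_ne_zero.2 (Ne.symm hAB)) h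
  · intro u v huv hadj
    obtain ⟨q, hq1, hq2⟩ := (hf u v huv).2 hadj
    exact ⟨q, key2 u q hq1, key2 v q hq2⟩



lemma half_cross {A B C D q : Pt} (hAB : B - A ≠ 0) (hCD : D - C ≠ 0)
    (hnsl : ¬ sameLine (A, B) (C, D))
    (hq1 : q ∈ openSegment ℝ A B) (hq2 : q ∈ openSegment ℝ C D) :
    Str A B C D := by
  rw [mem_openSegOf] at hq1 hq2
  obtain ⟨t, ⟨ht0, ht1⟩, hqt⟩ := hq1
  obtain ⟨s, ⟨hs0, hs1⟩, hqs⟩ := hq2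
  set gC := d2 (B - A) (C - A) with hgC
  set gD := d2 (B - A) (D - A) with hgD
  have hgq : d2 (B - A) (q - A) = 0 := by
    rw [hqt]
    have : A + t • (B - A) - A = t • (B - A) := by abel
    rw [this, d2_smul_right, d2_self]; ring
  have hDCd : d2 (B - A) (D - C) = gD - gC := by
    rw [hgD, hgC, ← d2_sub_right]; congr 1; abel
  have hqCs : q - C = s • (D - C) := by rw [hqs]; abel
  have hqC : d2 (B - A) (q - C) = -gC := by
    have : q - C = (q - A) - (C - A) := by abel
    rw [this, d2_sub_right, hgq, ← hgC]; ring
  have hgCne : gC ≠ 0 := by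
    intro h0
    apply hnsl
    have h1 : d2 (B - A) (D - C) = 0 := by
      have h2 : s * d2 (B - A) (D - C) = 0 := by
        rw [← d2_smul_right, ← hqCs, hqC, h0]; ring
      exact (mul_eq_zero.1 h2).resolve_left (ne_of_gt hs0)
    exact ⟨h1, h0⟩
  have hgDne : gD ≠ 0 := by
    intro h0
    apply hnsl
    have hqD : d2 (B - A) (q - D) = -gD := by
      have : q - D = (q - A) - (D - A) := by abel
      rw [this, d2_sub_right, hgq, ← hgD]; ring
    have hqDs : q - D = (s - 1) • (D - C) := by
      rw [hqs]; module
    have h1 : d2 (B - A) (D - C) = 0 := by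
      have h2 : (s - 1) * d2 (B - A) (D - C) = 0 := by
        rw [← d2_smul_right, ← hqDs, hqD, h0]; ring
      exact (mul_eq_zero.1 h2).resolve_left (by intro hh; linarith [hh])
    refine ⟨h1, ?_⟩
    show d2 (B - A) (C - A) = 0
    have : C - A = (D - A) - (D - C) := by abel
    rw [this, d2_sub_right, ← hgD, h1, h0]; ring
  have heq : gC + s * (gD - gC) = 0 := by
    have : q - A = (C - A) + s • (D - C) := by rw [hqs]; abel
    rw [this, d2_add_right, d2_smul_right, hDCd, ← hgC] at hgq
    exact hgq
  show gC * gD < 0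
  have hgC2 : 0 < gC * gC := by nlinarith [sq_pos_iff.2 hgCne]
  rcases lt_or_ge (gC * gD) 0 with hlt | hge
  · exact hlt
  · exfalso
    have h1 : s * gD = (s - 1) * gC := by linarith
    have h2 : s * (gD * gC) = (s - 1) * (gC * gC) := by
      calc s * (gD * gC) = (s * gD) * gC := by ring
        _ = ((s - 1) * gC) * gC := by rw [h1]
        _ = (s - 1) * (gC * gC) := by ring
    have h4 : 0 ≤ s * (gD * gC) := mul_nonneg hs0.le (by rw [mul_comm]; exact hge)
    have h5 : (s - 1) * (gC * gC) < 0 := mul_neg_of_neg_of_pos (by linarith) hgC2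
    linarith

lemma cross_pc {A B C D q : Pt} (hAB : B - A ≠ 0) (hCD : D - C ≠ 0)
    (hnsl : ¬ sameLine (A, B) (C, D))
    (hq1 : q ∈ openSegment ℝ A B) (hq2 : q ∈ openSegment ℝ C D) :
    PC (A, B) (C, D) := by
  constructor
  · exact half_cross hAB hCD hnsl hq1 hq2
  · refine half_cross hCD hAB ?_ hq2 hq1
    intro hsl
    exact hnsl (sameLine_symm (e := (C, D)) (e' := (A, B)) hCD hAB hsl)


lemma ip_add_left (x y z : Pt) : ip (x + y) z = ip x z + ip y z := by simp [ip]; ring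

lemma ip_rot_left (x : Pt) : ip (rot x) x = 0 := by simp [ip, rot]; ring

lemma rot_ne_zero {x : Pt} (hx : x ≠ 0) : rot x ≠ 0 := by
  intro h
  apply hx
  have h1 := congrArg Prod.fst h
  have h2 := congrArg Prod.snd h
  simp [rot] at h1 h2
  exact Prod.ext h2 h1

lemma d2_add_left (x y z : Pt) : d2 (x + y) z = d2 x z + d2 y z := by simp [d2]; ring

lemma between_strict {x y q t : ℝ} (hq : q = x + t * (y - x)) (ht0 : 0 < t) (ht1 : t < 1)
    (hxy : x ≠ y) : min x y < q ∧ q < max x y := by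
  rcases lt_or_gt_of_ne hxy with h | h
  · rw [min_eq_left (le_of_lt h), max_eq_right (le_of_lt h)]
    constructor <;> nlinarith
  · rw [min_eq_right (le_of_lt h), max_eq_left (le_of_lt h)]
    constructor <;> nlinarith

lemma shear_sameLine_bad {A B u : Pt} (hu : ip u u = 1) {μ : ℝ} (hμ : μ ≠ 0)
    (hAB : B - A = μ • u) (hαBA : ip B u - ip A u = μ) {p δ : ℝ} {e' : Pt × Pt}
    (hde' : dir e' ≠ 0)
    (h : sameLine (A + (δ * (ip A u - p)) • rot u, B + (δ * (ip B u - p)) • rot u) e') :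
    δ = -(d2 u (dir e')) / d2 (rot u) (dir e') := by
  have hd2un : d2 u (rot u) = 1 := by rw [d2_rot_self, hu]
  have hdir : (B + (δ * (ip B u - p)) • rot u) - (A + (δ * (ip A u - p)) • rot u)
      = μ • u + (δ * μ) • rot u := by
    rw [← hAB]
    have hs : δ * (ip B u - p) = δ * (ip A u - p) + δ * μ := by rw [← hαBA]; ring
    rw [hs]; module
  have h1 : d2 (μ • u + (δ * μ) • rot u) (dir e') = 0 := by
    have := h.1
    rw [dir] at this
    simpa [hdir] using this
  rw [d2_add_left, d2_smul_left, d2_smul_left] at h1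
  have h2 : d2 u (dir e') + δ * d2 (rot u) (dir e') = 0 := by
    have : μ * (d2 u (dir e') + δ * d2 (rot u) (dir e')) = 0 := by linarith [h1]
    exact (mul_eq_zero.1 this).resolve_left hμ
  rcases eq_or_ne (d2 (rot u) (dir e')) 0 with hz | hz
  · exfalso
    have hrne : rot u ≠ 0 := rot_ne_zero (fun h0 => by
      rw [h0] at hu; simp [ip] at hu)
    obtain ⟨κ, hκ⟩ := par_of_d2 hz hrne
    have hκ0 : κ ≠ 0 := fun h0 => hde' (by rw [hκ, h0, zero_smul])
    rw [hz, mul_zero, add_zero, hκ, d2_smul_right, hd2un, mul_one] at h2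
    exact hκ0 h2
  · field_simp
    linarith [h2]

lemma main_ind {V : Type*} [Fintype V] (G : SimpleGraph V) (f1 : V → Pt × Pt)
    (hnd1 : ∀ v, dir (f1 v) ≠ 0)
    (hwit : ∀ u v : V, u ≠ v → G.Adj u v →
      ∃ q : Pt, q ∈ openSegment ℝ (f1 u).1 (f1 u).2 ∧ q ∈ openSegment ℝ (f1 v).1 (f1 v).2) :
    ∀ (n : ℕ) (T : Finset V), T.card = n → ∀ g : V → Pt × Pt,
      (∀ v ∈ T, g v = f1 v) →
      (∀ u v : V, u ≠ v → ¬G.Adj u v → Disjoint (segOf (g u)) (segOf (g v))) →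
      (∀ u v : V, u ≠ v → G.Adj u v →
        (u ∈ T ∧ v ∈ T ∧ sameLine (f1 u) (f1 v)) ∨ PC (g u) (g v)) →
      (∀ v, dir (g v) ≠ 0) →
      (∀ u v : V, u ∉ T → v ∉ T → u ≠ v → ¬ sameLine (g u) (g v)) →
      ∃ g' : V → Pt × Pt,
        (∀ u v : V, u ≠ v → ¬G.Adj u v → Disjoint (segOf (g' u)) (segOf (g' v))) ∧
        (∀ u v : V, u ≠ v → G.Adj u v → PC (g' u) (g' v)) ∧
        (∀ v, dir (g' v) ≠ 0) ∧
        (∀ u v : V, u ≠ v → ¬ sameLine (g' u) (g' v)) := by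
  intro n
  induction n with
  | zero =>
    intro T hT g H1 H2 H3 H4 H5
    have hTe : T = ∅ := Finset.card_eq_zero.1 hT
    refine ⟨g, H2, ?_, H4, ?_⟩
    · intro x y hxy hadj
      rcases H3 x y hxy hadj with ⟨hu, _, _⟩ | hpc
      · rw [hTe] at hu; simp at hu
      · exact hpc
    · intro x y hxy
      exact H5 x y (by simp [hTe]) (by simp [hTe]) hxy
  | succ n ih =>
    intro T hT g H1 H2 H3 H4 H5
    classical
    have hTne : T.Nonempty := Finset.card_pos.1 (by rw [hT]; exact Nat.succ_pos n)
    obtain ⟨v₀, hv₀⟩ := hTne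
    set k : V → ℝ :=
      fun w => min (ip (f1 w).1 (unit (dir (f1 w)))) (ip (f1 w).2 (unit (dir (f1 w)))) with hk
    set C₀ : Finset V := T.filter (fun w => sameLine (f1 v₀) (f1 w)) with hC₀
    have hv₀C : v₀ ∈ C₀ := Finset.mem_filter.2 ⟨hv₀, sameLine_refl _⟩
    obtain ⟨v, hvC, hvmax⟩ := C₀.exists_max_image k ⟨v₀, hv₀C⟩
    have hvT : v ∈ T := (Finset.mem_filter.1 hvC).1
    have hsl0 : sameLine (f1 v₀) (f1 v) := (Finset.mem_filter.1 hvC).2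
    set A : Pt := (f1 v).1 with hA
    set B : Pt := (f1 v).2 with hB
    have hfv : (A, B) = f1 v := rfl
    set u : Pt := unit (dir (f1 v)) with hu_def
    have hu1 : ip u u = 1 := ip_unit_self _
    have hune : u ≠ 0 := unit_ne_zero _
    have hpar : d2 u (dir (f1 v)) = 0 := by
      rw [d2_comm, d2_unit]; ring
    obtain ⟨μ, hμeq⟩ := par_of_d2 hpar hune
    have hμ0 : μ ≠ 0 := fun h0 => hnd1 v (by rw [hμeq, h0, zero_smul])
    have hABμ : B - A = μ • u := hμeq
    have hαBA : ip B u - ip A u = μ := by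
      have h1 : ip (B - A) u = μ * ip u u := by rw [hABμ, ip_smul_left]
      rw [ip_sub_left, hu1, mul_one] at h1
      exact h1
    have hABne : ip A u ≠ ip B u := fun h0 => hμ0 (by rw [← hαBA, h0]; ring)
    -- witness points
    have hq' : ∀ w : V, ∃ qq : Pt, (v ≠ w ∧ G.Adj v w) →
        (qq ∈ openSegment ℝ A B ∧ qq ∈ openSegment ℝ (f1 w).1 (f1 w).2) := by
      intro w
      by_cases hcase : v ≠ w ∧ G.Adj v w
      · obtain ⟨q, h1, h2⟩ := hwit v w hcase.1 hcase.2
        exact ⟨q, fun _ => ⟨h1, h2⟩⟩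
      · exact ⟨0, fun hh => absurd hh hcase⟩
    choose qf hqf using hq'
    set Wv : Finset V := (T.erase v).filter (fun w => G.Adj v w ∧ sameLine (f1 v) (f1 w))
      with hWv
    -- coordinates of witness points are strictly inside
    have hqv : ∀ w ∈ Wv, min (ip A u) (ip B u) < ip (qf w) u ∧
        ip (qf w) u < max (ip A u) (ip B u) := by
      intro w hw
      obtain ⟨hw1, hw2⟩ := Finset.mem_filter.1 hw
      have hne : v ≠ w := fun h0 => (Finset.mem_erase.1 hw1).1 h0.symm
      obtain ⟨hq1, _⟩ := hqf w ⟨hne, hw2.1⟩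
      rw [mem_openSegOf] at hq1
      obtain ⟨t, ⟨ht0, ht1⟩, hqe⟩ := hq1
      have hco : ip (qf w) u = ip A u + t * (ip B u - ip A u) := by
        rw [hqe, ip_add_left, ip_smul_left, ip_sub_left]
      exact between_strict hco ht0 ht1 hABne
    -- pivot
    have hane : min (ip A u) (ip B u) < max (ip A u) (ip B u) := min_lt_max.2 hABne
    set a : ℝ := min (ip A u) (ip B u) with ha
    set b : ℝ := max (ip A u) (ip B u) with hb
    set mset : Finset ℝ := insert (b - a) (Wv.image (fun w => ip (qf w) u - a)) with hmset
    have hmne : mset.Nonempty := ⟨b - a, Finset.mem_insert_self _ _⟩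
    set m : ℝ := mset.min' hmne with hm
    have hmpos : 0 < m := by
      rw [hm, Finset.lt_min'_iff]
      intro x hx
      rcases Finset.mem_insert.1 hx with rfl | hx
      · linarith
      · obtain ⟨w, hw, rfl⟩ := Finset.mem_image.1 hx
        have := (hqv w hw).1
        linarith
    set p : ℝ := a + m / 2 with hp
    have hpa : a < p := by rw [hp]; linarith
    have hpb : p < b := by
      have hle : m ≤ b - a := Finset.min'_le _ _ (Finset.mem_insert_self _ _)
      rw [hp]; linarith
    have hpv : (ip A u - p) * (ip B u - p) < 0 := min_max_pos hpa hpb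
    -- epsilon for stability
    have hcon : ∀ y : V, ∃ ε : ℝ, 0 < ε ∧ ∀ A' B' : Pt, dist A' A < ε → dist B' B < ε →
        ((y ≠ v ∧ ¬G.Adj v y) → Disjoint (segOf (A', B')) (segOf (g y))) ∧
        ((y ≠ v ∧ G.Adj v y ∧ PC (g v) (g y)) → PC (A', B') (g y)) := by
      intro y
      by_cases hy1 : y ≠ v ∧ ¬G.Adj v y
      · have hdisj : Disjoint (segOf (g v)) (segOf (g y)) := H2 v y (Ne.symm hy1.1) hy1.2
        obtain ⟨ρ, hρ, hsep⟩ := sep_of_disjoint hdisj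
        refine ⟨ρ / 2, by linarith, fun A' B' hA' hB' =>
          ⟨fun _ => ?_, fun hc => absurd hc.2.1 hy1.2⟩⟩
        have hgv : segOf (g v) = segOf (A, B) := by rw [hfv, H1 v hvT]
        rw [hgv] at hsep
        refine disjoint_from_sep (s := segOf (A, B)) hsep ?_
        intro x hx
        obtain ⟨z, hz, hd⟩ := seg_close (le_of_lt hA') (le_of_lt hB') x hx
        exact ⟨z, hz, lt_of_le_of_lt hd (by linarith)⟩
      · by_cases hy2 : y ≠ v ∧ G.Adj v y ∧ PC (g v) (g y)
        · have hpc : PC (A, B) ((g y).1, (g y).2) := by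
            have := hy2.2.2
            rw [← H1 v hvT] at hfv
            rw [← hfv] at this
            simpa using this
          obtain ⟨ε, hε, hstab⟩ := pc_stable hpc
          refine ⟨ε, hε, fun A' B' h1 h2 => ⟨fun hc => absurd hc hy1, fun _ => ?_⟩⟩
          have := hstab A' B' h1 h2
          simpa using this
        · exact ⟨1, one_pos, fun A' B' _ _ =>
            ⟨fun hc => absurd hc hy1, fun hc => absurd hc hy2⟩⟩
    choose εf hεfpos hεf using hcon
    obtain ⟨ε0, hε0pos, hε0le⟩ := exists_pos_le_finset Finset.univ εf hεfpos
    -- choice of δ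
    set nn : Pt := rot u with hnn
    set KK : ℝ := (|ip A u - p| + |ip B u - p| + 1) * (‖nn‖ + 1) with hKK
    have hKKpos : 0 < KK := by
      rw [hKK]; positivity
    set bad : V → ℝ := fun y => -(d2 u (dir (g y))) / d2 nn (dir (g y)) with hbad
    obtain ⟨δ, hδIoo, hδbad⟩ :=
      (Set.Ioo_infinite (show (0:ℝ) < ε0 / KK by positivity)).exists_notMem_finset
        (Finset.univ.image bad)
    obtain ⟨hδpos, hδlt⟩ := hδIoo
    have hδne : δ ≠ 0 := ne_of_gt hδpos
    set A' : Pt := A + (δ * (ip A u - p)) • nn with hA'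
    set B' : Pt := B + (δ * (ip B u - p)) • nn with hB'
    have hδKK : δ * KK < ε0 := by
      rw [← lt_div_iff₀ hKKpos] at *
      exact hδlt
    have hdistA : dist A' A < ε0 := by
      rw [hA', dist_eq_norm, add_sub_cancel_left, norm_smul, Real.norm_eq_abs, abs_mul,
        abs_of_pos hδpos]
      have h1 : |ip A u - p| * ‖nn‖ ≤ KK := by
        rw [hKK]
        nlinarith [abs_nonneg (ip A u - p), abs_nonneg (ip B u - p), norm_nonneg nn]
      nlinarith [norm_nonneg nn, abs_nonneg (ip A u - p)]
    have hdistB : dist B' B < ε0 := by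
      rw [hB', dist_eq_norm, add_sub_cancel_left, norm_smul, Real.norm_eq_abs, abs_mul,
        abs_of_pos hδpos]
      have h1 : |ip B u - p| * ‖nn‖ ≤ KK := by
        rw [hKK]
        nlinarith [abs_nonneg (ip A u - p), abs_nonneg (ip B u - p), norm_nonneg nn]
      nlinarith [norm_nonneg nn, abs_nonneg (ip B u - p)]
    have hdA : ∀ y : V, dist A' A < εf y :=
      fun y => lt_of_lt_of_le hdistA (hε0le y (Finset.mem_univ y))
    have hdB : ∀ y : V, dist B' B < εf y :=
      fun y => lt_of_lt_of_le hdistB (hε0le y (Finset.mem_univ y))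
    set g' : V → Pt × Pt := Function.update g v (A', B') with hg'
    have hg'v : g' v = (A', B') := Function.update_self _ _ _
    have hg'ne : ∀ y : V, y ≠ v → g' y = g y := fun y hy => Function.update_of_ne hy _ _
    -- new direction nonzero
    have hdir' : dir (g' v) = μ • u + (δ * μ) • nn := by
      rw [hg'v, dir, hA', hB']
      show B + (δ * (ip B u - p)) • nn - (A + (δ * (ip A u - p)) • nn) = _
      rw [← hABμ]
      have hs : δ * (ip B u - p) = δ * (ip A u - p) + δ * μ := by rw [← hαBA]; ring
      rw [hs]; module
    have hnnu : ip nn u = 0 := by rw [hnn]; exact ip_rot_left u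
    have hdir'ne : dir (g' v) ≠ 0 := by
      rw [hdir']
      intro h0
      have h1 : ip (μ • u + (δ * μ) • nn) u = 0 := by rw [h0]; simp [ip]
      rw [ip_add_left, ip_smul_left, ip_smul_left, hu1, hnnu] at h1
      simp at h1
      exact hμ0 h1
    -- the core: proper crossing with same-line untilted neighbours
    have hPCv : ∀ y : V, y ≠ v → G.Adj v y → PC (A', B') (g y) := by
      intro y hyv hadj
      rcases H3 v y (Ne.symm hyv) hadj with ⟨_, hyT, hsl⟩ | hpc
      · -- core computation
        have hyW : y ∈ Wv := Finset.mem_filter.2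
          ⟨Finset.mem_erase.2 ⟨hyv, hyT⟩, hadj, hsl⟩
        -- direction of y parallel to u
        have hpar1 : d2 u (dir (f1 y)) = 0 := by
          have h1 := hsl.1
          rw [hμeq, d2_smul_left] at h1
          exact (mul_eq_zero.1 h1).resolve_left hμ0
        obtain ⟨lam, hlam⟩ := par_of_d2 hpar1 hune
        have hlam0 : lam ≠ 0 := fun h0 => hnd1 y (by rw [hlam, h0, zero_smul])
        have hDC : (f1 y).2 - (f1 y).1 = lam • u := hlam
        have hpar2 : d2 u ((f1 y).1 - A) = 0 := by
          have h2 := hsl.2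
          rw [hμeq, d2_smul_left] at h2
          exact (mul_eq_zero.1 h2).resolve_left hμ0
        obtain ⟨γ, hγ⟩ := par_of_d2 hpar2 hune
        have hCA : (f1 y).1 - A = γ • u := hγ
        -- w coordinates
        have huy : unit (dir (f1 y)) = u := unit_eq_of_par (hnd1 v) (hnd1 y) hsl.1
        have hky : k y ≤ k v := hvmax y (Finset.mem_filter.2
          ⟨hyT, sameLine_trans (hnd1 v₀) (hnd1 v) hsl0 hsl⟩)
        have hkyval : k y = min (ip (f1 y).1 u) (ip (f1 y).2 u) := by
          rw [show k y = min (ip (f1 y).1 (unit (dir (f1 y)))) (ip (f1 y).2 (unit (dir (f1 y)))) from rfl, huy]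
        have hkvval : k v = a := rfl
        -- p strictly between coordinates of C and D
        have hqy := hqv y hyW
        have hqCD : min (ip (f1 y).1 u) (ip (f1 y).2 u) < ip (qf y) u ∧
            ip (qf y) u < max (ip (f1 y).1 u) (ip (f1 y).2 u) := by
          have hne : v ≠ y := fun h0 => hyv h0.symm
          obtain ⟨_, hq2⟩ := hqf y ⟨hne, hadj⟩
          rw [mem_openSegOf] at hq2
          obtain ⟨t, ⟨ht0, ht1⟩, hqe⟩ := hq2
          have hco : ip (qf y) u = ip (f1 y).1 u + t * (ip (f1 y).2 u - ip (f1 y).1 u) := by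
            rw [hqe, ip_add_left, ip_smul_left, ip_sub_left]
          have hCDne : ip (f1 y).1 u ≠ ip (f1 y).2 u := by
            intro h0
            apply hlam0
            have hh : ip ((f1 y).2 - (f1 y).1) u = lam * ip u u := by rw [hDC, ip_smul_left]
            rw [ip_sub_left, hu1, mul_one, ← h0] at hh
            linarith
          exact between_strict hco ht0 ht1 hCDne
        have hple : p ≤ a + (ip (qf y) u - a) / 2 := by
          have hle : m ≤ ip (qf y) u - a :=
            Finset.min'_le _ _ (Finset.mem_insert.2 (Or.inr (Finset.mem_image.2 ⟨y, hyW, rfl⟩)))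
          rw [hp]; linarith
        have hpw : (ip (f1 y).1 u - p) * (ip (f1 y).2 u - p) < 0 := by
          apply min_max_pos
          · calc min (ip (f1 y).1 u) (ip (f1 y).2 u) = k y := hkyval.symm
              _ ≤ k v := hky
              _ = a := hkvval
              _ < p := hpa
          · calc p ≤ a + (ip (qf y) u - a) / 2 := hple
              _ < ip (qf y) u := by linarith [hqy.1]
              _ ≤ max (ip (f1 y).1 u) (ip (f1 y).2 u) := le_of_lt hqCD.2
        have hcore := core_pc hu1 hμ0 hlam0 hABμ hCA hDC hδne hpv hpw
        have hgy : g y = ((f1 y).1, (f1 y).2) := by rw [H1 y hyT]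
        rw [hgy]
        rw [← hnn, ← hA', ← hB'] at hcore
        exact hcore
      · exact (hεf y A' B' (hdA y) (hdB y)).2 ⟨hyv, hadj, hpc⟩
    -- apply induction hypothesis
    have hT' : (T.erase v).card = n := by
      rw [Finset.card_erase_of_mem hvT, hT]; rfl
    refine ih (T.erase v) hT' g' ?_ ?_ ?_ ?_ ?_
    · intro w hw
      rw [hg'ne w (Finset.ne_of_mem_erase hw)]
      exact H1 w (Finset.mem_of_mem_erase hw)
    · intro x y hxy hnadj
      by_cases hx : x = v
      · rw [hx] at hnadj hxy ⊢
        have hyv : y ≠ v := fun h0 => hxy h0.symm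
        rw [hg'v, hg'ne y hyv]
        exact (hεf y A' B' (hdA y) (hdB y)).1 ⟨hyv, hnadj⟩
      · by_cases hy : y = v
        · rw [hy] at hnadj hxy ⊢
          rw [hg'v, hg'ne x hx]
          exact ((hεf x A' B' (hdA x) (hdB x)).1 ⟨hx, fun h => hnadj h.symm⟩).symm
        · rw [hg'ne x hx, hg'ne y hy]
          exact H2 x y hxy hnadj
    · intro x y hxy hadj
      by_cases hx : x = v
      · rw [hx] at hadj hxy ⊢
        have hyv : y ≠ v := fun h0 => hxy h0.symm
        rw [hg'v, hg'ne y hyv]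
        exact Or.inr (hPCv y hyv hadj)
      · by_cases hy : y = v
        · rw [hy] at hadj hxy ⊢
          rw [hg'v, hg'ne x hx]
          exact Or.inr (hPCv x hx hadj.symm).symm
        · rw [hg'ne x hx, hg'ne y hy]
          rcases H3 x y hxy hadj with ⟨hxT, hyT, hsl⟩ | hpc
          · exact Or.inl ⟨Finset.mem_erase.2 ⟨hx, hxT⟩, Finset.mem_erase.2 ⟨hy, hyT⟩, hsl⟩
          · exact Or.inr hpc
    · intro w
      by_cases hw : w = v
      · rw [hw]; exact hdir'ne
      · rw [hg'ne w hw]; exact H4 w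
    · intro x y hx hy hxy
      by_cases hxv : x = v
      · rw [hxv] at hxy ⊢
        have hyv : y ≠ v := fun h0 => hxy h0.symm
        have hyT : y ∉ T := fun h0 => hy (Finset.mem_erase.2 ⟨hyv, h0⟩)
        rw [hg'v, hg'ne y hyv]
        intro hsl
        apply hδbad
        apply Finset.mem_image.2
        refine ⟨y, Finset.mem_univ _, ?_⟩
        have hbd := shear_sameLine_bad hu1 hμ0 hABμ hαBA (H4 y) (by
          rw [← hnn, ← hA', ← hB']
          exact hsl)
        rw [← hnn] at hbd
        rw [hbad]; dsimp only; exact hbd.symm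
      · by_cases hyv : y = v
        · rw [hyv] at hxy ⊢
          have hxT : x ∉ T := fun h0 => hx (Finset.mem_erase.2 ⟨hxv, h0⟩)
          rw [hg'v, hg'ne x hxv]
          intro hsl
          have hsl2 : sameLine (A', B') (g x) := by
            have h2 := sameLine_symm (e := g x) (e' := (A', B')) (H4 x) ?_ hsl
            · exact h2
            · show dir (A', B') ≠ 0
              rw [← hg'v]; exact hdir'ne
          apply hδbad
          apply Finset.mem_image.2
          refine ⟨x, Finset.mem_univ _, ?_⟩
          have hbd := shear_sameLine_bad hu1 hμ0 hABμ hαBA (H4 x) (by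
            rw [← hnn, ← hA', ← hB']
            exact hsl2)
          rw [← hnn] at hbd
          rw [hbad]; dsimp only; exact hbd.symm
        · have hxT : x ∉ T := fun h0 => hx (Finset.mem_erase.2 ⟨hxv, h0⟩)
          have hyT : y ∉ T := fun h0 => hy (Finset.mem_erase.2 ⟨hyv, h0⟩)
          rw [hg'ne x hxv, hg'ne y hyv]
          exact H5 x y hxT hyT hxy

end SegAux

open SegAux in
theorem stmt8 {V : Type*} [Fintype V] (G : SimpleGraph V) (h : IsSegGraph G) :
    ∃ f : V → (ℝ × ℝ) × (ℝ × ℝ), IsSegRep G f ∧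
      (∀ v : V, (f v).1 ≠ (f v).2) ∧
      (∀ u v : V, u ≠ v →
        ¬ Collinear ℝ ({(f u).1, (f u).2, (f v).1, (f v).2} : Set (ℝ × ℝ))) := by
  classical
  obtain ⟨f₀, hf₀⟩ := h
  obtain ⟨f1, hrep1, hnd1, hwit⟩ := SegAux.phaseA G f₀ hf₀
  have H2 : ∀ u v : V, u ≠ v → ¬G.Adj u v → Disjoint (segOf (f1 u)) (segOf (f1 v)) := by
    intro u v huv hnadj
    rw [Set.disjoint_iff_inter_eq_empty, ← Set.not_nonempty_iff_eq_empty]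
    intro hne; exact hnadj ((hrep1 u v huv).1 hne)
  have H3 : ∀ u v : V, u ≠ v → G.Adj u v →
      (u ∈ (Finset.univ : Finset V) ∧ v ∈ (Finset.univ : Finset V) ∧ sameLine (f1 u) (f1 v))
        ∨ PC (f1 u) (f1 v) := by
    intro u v huv hadj
    by_cases hsl : sameLine (f1 u) (f1 v)
    · exact Or.inl ⟨Finset.mem_univ _, Finset.mem_univ _, hsl⟩
    · right
      obtain ⟨q, hq1, hq2⟩ := hwit u v huv hadj
      have hnsl : ¬ sameLine ((f1 u).1, (f1 u).2) ((f1 v).1, (f1 v).2) := by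
        simpa using hsl
      have hpc := cross_pc (hnd1 u) (hnd1 v) hnsl hq1 hq2
      simpa using hpc
  obtain ⟨g', hG2, hG3, hG4, hG5⟩ := SegAux.main_ind G f1 hnd1 hwit
    (Finset.univ : Finset V).card Finset.univ rfl f1 (fun _ _ => rfl) H2 H3 hnd1
    (fun u v hu _ _ => absurd (Finset.mem_univ u) hu)
  refine ⟨g', ?_, ?_, ?_⟩
  · intro u v huv
    constructor
    · intro hne
      by_contra hnadj
      have hd := hG2 u v huv hnadj
      rw [Set.disjoint_iff_inter_eq_empty] at hd
      rw [hd] at hne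
      exact Set.not_nonempty_empty hne
    · intro hadj
      have hpc := hG3 u v huv hadj
      have hpc2 : PC ((g' u).1, (g' u).2) ((g' v).1, (g' v).2) := by simpa using hpc
      have := PC_inter hpc2
      simpa using this
  · intro v
    have := hG4 v
    rw [dir] at this
    intro h0
    exact this (by rw [h0, sub_self])
  · intro u v huv hcol
    exact hG5 u v huv (sameLine_of_collinear hcol)
end

section
/- Let p₁, …, p_m be nonzero univariate real polynomials with deg p_i = d_i, and for a sign vector σ ∈ {−1, 0, +1}^m let S_σ = {x ∈ ℝ : sgn(p_i(x)) = σ_i for all i}. Then for every set Σ ⊆ {−1, 0, +1}^m, the set S = ⋃_{σ ∈ Σ} S_σ has at most 2·(d₁ + ⋯ + d_m) + 1 connected components. -/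
theorem stmt11 (m : ℕ) (p : Fin m → Polynomial ℝ) (hp : ∀ i, p i ≠ 0)
    (d : Fin m → ℕ) (hd : ∀ i, (p i).natDegree = d i)
    (Sig : Set (Fin m → SignType))
    (S : Set ℝ)
    (hS : S = ⋃ σ ∈ Sig, {x : ℝ | ∀ i, SignType.sign ((p i).eval x) = σ i}) :
    Finite (ConnectedComponents ↥S) ∧
      Nat.card (ConnectedComponents ↥S) ≤ 2 * (∑ i, d i) + 1 := by
  classical
  set P : Polynomial ℝ := ∏ i, p i with hP
  have hPne : P ≠ 0 := Finset.prod_ne_zero_iff.mpr (fun i _ => hp i)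
  set Z : Finset ℝ := P.roots.toFinset with hZ
  -- the number of roots is at most the total degree
  have hZcard : Z.card ≤ ∑ i, d i := by
    calc Z.card ≤ Multiset.card P.roots := Multiset.toFinset_card_le _
    _ ≤ P.natDegree := P.card_roots'
    _ = ∑ i, (p i).natDegree := Polynomial.natDegree_prod _ _ (fun i _ => hp i)
    _ = ∑ i, d i := by simp [hd]
  have hZmem : ∀ t : ℝ, t ∈ Z ↔ ∃ i, (p i).eval t = 0 := by
    intro t
    simp [hZ, Polynomial.mem_roots, hPne, hP, Polynomial.IsRoot, Polynomial.eval_prod, hp,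
      Finset.prod_eq_zero_iff]
  -- sign constancy on intervals without roots
  have signconst : ∀ (q : Polynomial ℝ) (a b : ℝ), (∀ s ∈ Set.uIcc a b, q.eval s ≠ 0) →
      SignType.sign (q.eval b) = SignType.sign (q.eval a) := by
    intro q a b h
    have ha := h a Set.left_mem_uIcc
    have hb := h b Set.right_mem_uIcc
    have hivt := intermediate_value_uIcc (f := fun s => q.eval s) (a := a) (b := b)
      q.continuous_aeval.continuousOn
    rcases ha.lt_or_gt with ha' | ha' <;> rcases hb.lt_or_gt with hb' | hb'
    · rw [sign_neg ha', sign_neg hb']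
    · obtain ⟨s, hs, hs0⟩ := hivt (Set.mem_uIcc.mpr (Or.inl ⟨ha'.le, hb'.le⟩))
      exact absurd hs0 (h s hs)
    · obtain ⟨s, hs, hs0⟩ := hivt (Set.mem_uIcc.mpr (Or.inr ⟨hb'.le, ha'.le⟩))
      exact absurd hs0 (h s hs)
    · rw [sign_pos ha', sign_pos hb']
  -- rank function
  set r : ℝ → ℕ := fun x => (Z.filter (fun z => z < x)).card with hr
  have rankne : ∀ x y s : ℝ, s ∈ Set.uIcc x y → s ≠ x → s ≠ y → s ∈ Z → r x ≠ r y := by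
    intro x y s hs hsx hsy hsZ
    rcases lt_trichotomy x y with hxy | hxy | hxy
    · rw [Set.uIcc_of_le hxy.le] at hs
      have hss : Z.filter (fun z => z < x) ⊂ Z.filter (fun z => z < y) := by
        refine Finset.ssubset_iff_of_subset ?_ |>.mpr ?_
        · intro z hz
          rw [Finset.mem_filter] at hz ⊢
          exact ⟨hz.1, hz.2.trans hxy⟩
        · refine ⟨s, ?_, ?_⟩
          · rw [Finset.mem_filter]
            exact ⟨hsZ, lt_of_le_of_ne hs.2 hsy⟩
          · rw [Finset.mem_filter]
            rintro ⟨-, hlt⟩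
            exact absurd (lt_of_le_of_ne hs.1 (Ne.symm hsx)).not_gt (not_not_intro hlt)
      exact (Finset.card_lt_card hss).ne
    · subst hxy
      rw [Set.uIcc_self, Set.mem_singleton_iff] at hs
      exact absurd hs hsx
    · rw [Set.uIcc_of_ge hxy.le] at hs
      have hss : Z.filter (fun z => z < y) ⊂ Z.filter (fun z => z < x) := by
        refine Finset.ssubset_iff_of_subset ?_ |>.mpr ?_
        · intro z hz
          rw [Finset.mem_filter] at hz ⊢
          exact ⟨hz.1, hz.2.trans hxy⟩
        · refine ⟨s, ?_, ?_⟩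
          · rw [Finset.mem_filter]
            exact ⟨hsZ, lt_of_le_of_ne hs.2 hsx⟩
          · rw [Finset.mem_filter]
            rintro ⟨-, hlt⟩
            exact absurd (lt_of_le_of_ne hs.1 (Ne.symm hsy)).not_gt (not_not_intro hlt)
      exact (Finset.card_lt_card hss).ne.symm
  -- same interval implies whole interval is in S
  have interval_sub : ∀ x y : ℝ, x ∈ S → x ∉ Z → y ∉ Z → r x = r y → Set.uIcc x y ⊆ S := by
    intro x y hxS hxZ hyZ hrxy t ht
    have hne : ∀ s ∈ Set.uIcc x y, ∀ i, (p i).eval s ≠ 0 := by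
      intro s hs i h0
      have hsZ : s ∈ Z := (hZmem s).mpr ⟨i, h0⟩
      have hsx : s ≠ x := fun h => hxZ (h ▸ hsZ)
      have hsy : s ≠ y := fun h => hyZ (h ▸ hsZ)
      exact rankne x y s hs hsx hsy hsZ hrxy
    have hsign : ∀ i, SignType.sign ((p i).eval t) = SignType.sign ((p i).eval x) := by
      intro i
      refine signconst (p i) x t (fun s hs => hne s ?_ i)
      exact Set.uIcc_subset_uIcc Set.left_mem_uIcc ht hs
    rw [hS] at hxS ⊢
    simp only [Set.mem_iUnion, Set.mem_setOf_eq] at hxS ⊢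
    obtain ⟨σ, hσ, hσx⟩ := hxS
    exact ⟨σ, hσ, fun i => (hsign i).trans (hσx i)⟩
  -- same uIcc in S implies same connected component
  have samecomp : ∀ (x y : ℝ) (hx : x ∈ S) (hy : y ∈ S), Set.uIcc x y ⊆ S →
      ConnectedComponents.mk (⟨x, hx⟩ : ↥S) = ConnectedComponents.mk ⟨y, hy⟩ := by
    intro x y hx hy hsub
    set A : Set ↥S := Subtype.val ⁻¹' Set.uIcc x y with hA
    have himg : Subtype.val '' A = Set.uIcc x y := by
      rw [hA, Subtype.image_preimage_coe]
      exact Set.inter_eq_right.mpr hsub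
    have hpre : IsPreconnected A := by
      rw [← Topology.IsInducing.subtypeVal.isPreconnected_image, himg]
      exact isPreconnected_uIcc
    rw [ConnectedComponents.coe_eq_coe']
    have hyA : (⟨y, hy⟩ : ↥S) ∈ A := Set.right_mem_uIcc
    have hxA : (⟨x, hx⟩ : ↥S) ∈ A := Set.left_mem_uIcc
    exact hpre.subset_connectedComponent hyA hxA
  -- the labelling
  have hrle : ∀ x : ℝ, r x < Z.card + 1 :=
    fun x => Nat.lt_succ_of_le (Finset.card_filter_le _ _)
  set label : ↥S → (↥Z ⊕ Fin (Z.card + 1)) := fun x =>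
    if h : (x : ℝ) ∈ Z then Sum.inl ⟨x, h⟩ else Sum.inr ⟨r x, hrle x⟩ with hlabel
  have key : ∀ a b : ↥S, label a = label b →
      ConnectedComponents.mk a = ConnectedComponents.mk b := by
    intro a b hab
    rw [hlabel] at hab
    by_cases haZ : (a : ℝ) ∈ Z <;> by_cases hbZ : (b : ℝ) ∈ Z <;>
      simp only [haZ, hbZ, dif_pos, dif_neg, not_false_iff] at hab
    · have hab' : (a : ℝ) = b := by
        have := Sum.inl.inj hab
        exact congrArg (Subtype.val : ↥Z → ℝ) this
      rw [Subtype.ext hab']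
    · exact absurd hab (by simp)
    · exact absurd hab (by simp)
    · have hrab : r a = r b := by
        have := Sum.inr.inj hab
        exact congrArg Fin.val this
      exact samecomp a b a.2 b.2 (interval_sub a b a.2 haZ hbZ hrab)
  by_cases hne : Nonempty ↥S
  · obtain ⟨a0⟩ := hne
    set g : (↥Z ⊕ Fin (Z.card + 1)) → ConnectedComponents ↥S := fun l =>
      if h : ∃ a : ↥S, label a = l then ConnectedComponents.mk h.choose
      else ConnectedComponents.mk a0 with hg
    have hgsurj : Function.Surjective g := by
      intro c
      obtain ⟨a, ha⟩ := ConnectedComponents.surjective_coe c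
      refine ⟨label a, ?_⟩
      have hex : ∃ b : ↥S, label b = label a := ⟨a, rfl⟩
      have : g (label a) = ConnectedComponents.mk hex.choose := by
        simp only [hg]
        exact dif_pos hex
      rw [this, key hex.choose a hex.choose_spec, ha]
    refine ⟨Finite.of_surjective g hgsurj, ?_⟩
    calc Nat.card (ConnectedComponents ↥S) ≤ Nat.card (↥Z ⊕ Fin (Z.card + 1)) :=
          Nat.card_le_card_of_surjective g hgsurj
      _ = Z.card + (Z.card + 1) := by simp [Nat.card_eq_fintype_card]
      _ = 2 * Z.card + 1 := by ring
      _ ≤ 2 * (∑ i, d i) + 1 := by omega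
  · have : IsEmpty ↥S := not_nonempty_iff.mp hne
    have hE : IsEmpty (ConnectedComponents ↥S) := by
      constructor
      intro c
      obtain ⟨a, -⟩ := ConnectedComponents.surjective_coe c
      exact this.false a
    refine ⟨Finite.of_subsingleton, ?_⟩
    rw [Nat.card_of_isEmpty]
    omega
end

section
/- There exists a bivariate polynomial p with integer coefficients such that p(x, y) > 0 for all (x, y) ∈ ℝ², and yet the infimum of p over ℝ² is 0; that is, for every ε > 0 there exists (x, y) ∈ ℝ² with p(x, y) < ε. -/
open MvPolynomial

theorem stmt13 :
    ∃ p : MvPolynomial (Fin 2) ℤ,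
      (∀ x y : ℝ, 0 < aeval ![x, y] p) ∧
      ∀ ε : ℝ, 0 < ε → ∃ x y : ℝ, aeval ![x, y] p < ε := by
  refine ⟨(X 0 * X 1 - 1)^2 + (X 0)^2, ?_, ?_⟩
  · intro x y
    simp only [map_add, map_pow, map_sub, map_mul, aeval_X, map_one]
    have h0 : (![x, y] 0 : ℝ) = x := rfl
    have h1 : (![x, y] 1 : ℝ) = y := rfl
    rw [h0, h1]
    rcases eq_or_ne x 0 with hx | hx
    · subst hx; norm_num
    · positivity
  · intro ε hε
    obtain ⟨n, hn⟩ := exists_nat_gt (1 / ε)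
    have hn0 : (0:ℝ) < n + 1 := by positivity
    refine ⟨1 / (n + 1), n + 1, ?_⟩
    simp only [map_add, map_pow, map_sub, map_mul, aeval_X, map_one]
    have h0 : (![1 / ((n:ℝ) + 1), (n:ℝ) + 1] 0 : ℝ) = 1 / (n + 1) := rfl
    have h1 : (![1 / ((n:ℝ) + 1), (n:ℝ) + 1] 1 : ℝ) = n + 1 := rfl
    rw [h0, h1]
    have : (1 / ((n:ℝ) + 1)) * ((n:ℝ) + 1) - 1 = 0 := by
      field_simp
      norm_num
    rw [this]
    have h2 : (1 / ((n:ℝ) + 1))^2 < ε := by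
      rw [div_pow, one_pow]
      rw [div_lt_iff₀ (by positivity)]
      have : 1 / ε < (n:ℝ) + 1 := lt_of_lt_of_le hn (by linarith)
      have hlt : 1 < ε * ((n:ℝ)+1) := by
        rw [div_lt_iff₀ hε] at this; linarith [this]
      calc (1:ℝ) < ε * ((n:ℝ)+1) := hlt
        _ ≤ ε * ((n:ℝ)+1)^2 := by nlinarith [hn0]
    linarith [h2]
end

section
/- For every finite set P of univariate polynomials with rational coefficients, there exists a finite set Q of univariate polynomials with rational coefficients such that P ⊆ Q, Q is closed under differentiation (if p ∈ Q then its derivative p′ ∈ Q), and Q is closed under taking remainders (if p, q ∈ Q with q ≠ 0, then the Euclidean remainder p mod q belongs to Q). -/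
open Polynomial

open scoped Classical in
noncomputable def myStep14 (P' S : Finset (Polynomial ℚ)) (d : ℕ) : Finset (Polynomial ℚ) :=
  S ∪ (P' ∪ S.image derivative ∪ (S ×ˢ S).image (fun x => x.1 % x.2)).filter
    (fun r => r ≠ 0 ∧ r.natDegree = d)

noncomputable def myF14 (P' : Finset (Polynomial ℚ)) (M : ℕ) : ℕ → Finset (Polynomial ℚ)
  | 0 => myStep14 P' ∅ M
  | (k+1) => myStep14 P' (myF14 P' M k) (M - (k+1))

lemma subset_myStep14 (P' S : Finset (Polynomial ℚ)) (d : ℕ) : S ⊆ myStep14 P' S d := by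
  classical
  exact Finset.subset_union_left

lemma mem_myStep14 (P' S : Finset (Polynomial ℚ)) (d : ℕ) (r : Polynomial ℚ) :
    r ∈ myStep14 P' S d ↔ r ∈ S ∨ (r ≠ 0 ∧ r.natDegree = d ∧
      (r ∈ P' ∨ (∃ p ∈ S, r = derivative p) ∨ ∃ p ∈ S, ∃ q ∈ S, r = p % q)) := by
  classical
  simp only [myStep14, Finset.mem_union, Finset.mem_filter, Finset.mem_image,
    Finset.mem_product, Prod.exists]
  constructor
  · rintro (h | ⟨((h | ⟨p, hp, rfl⟩) | ⟨p, q, ⟨hp, hq⟩, rfl⟩), h1, h2⟩)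
    · exact Or.inl h
    · exact Or.inr ⟨h1, h2, Or.inl h⟩
    · exact Or.inr ⟨h1, h2, Or.inr (Or.inl ⟨p, hp, rfl⟩)⟩
    · exact Or.inr ⟨h1, h2, Or.inr (Or.inr ⟨p, hp, q, hq, rfl⟩)⟩
  · rintro (h | ⟨h1, h2, (h | ⟨p, hp, rfl⟩ | ⟨p, hp, q, hq, rfl⟩)⟩)
    · exact Or.inl h
    · exact Or.inr ⟨Or.inl (Or.inl h), h1, h2⟩
    · exact Or.inr ⟨Or.inl (Or.inr ⟨p, hp, rfl⟩), h1, h2⟩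
    · exact Or.inr ⟨Or.inr ⟨p, q, ⟨hp, hq⟩, rfl⟩, h1, h2⟩

lemma myF14_mono (P' : Finset (Polynomial ℚ)) (M : ℕ) {k l : ℕ} (h : k ≤ l) :
    myF14 P' M k ⊆ myF14 P' M l := by
  induction l with
  | zero => simp_all
  | succ l ih =>
    rcases Nat.lt_or_ge k (l+1) with h' | h'
    · exact (ih (Nat.lt_succ_iff.mp h')).trans (subset_myStep14 _ _ _)
    · have : k = l + 1 := le_antisymm h h'
      subst this; exact Finset.Subset.refl _

lemma myF14_inv (P' : Finset (Polynomial ℚ)) (M : ℕ) :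
    ∀ k, k ≤ M → ∀ r ∈ myF14 P' M k,
      r ≠ 0 ∧ r.natDegree ≤ M ∧ M - r.natDegree ≤ k ∧ r ∈ myF14 P' M (M - r.natDegree) := by
  intro k
  induction k with
  | zero =>
    intro _ r hr
    rcases (mem_myStep14 P' ∅ M r).mp hr with h | ⟨h1, h2, _⟩
    · simp at h
    · refine ⟨h1, h2.le, by omega, ?_⟩
      have : M - r.natDegree = 0 := by omega
      rw [this]; exact hr
  | succ k ih =>
    intro hk r hr
    rcases (mem_myStep14 P' (myF14 P' M k) (M - (k+1)) r).mp hr with h | ⟨h1, h2, _⟩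
    · obtain ⟨a, b, c, d⟩ := ih (by omega) r h
      exact ⟨a, b, by omega, d⟩
    · refine ⟨h1, by omega, by omega, ?_⟩
      have : M - r.natDegree = k + 1 := by omega
      rw [this]; exact hr

lemma myF14_ins (P' : Finset (Polynomial ℚ)) (M : ℕ) (r : Polynomial ℚ)
    (hr : r ≠ 0) (hd : r.natDegree ≤ M)
    (h : r ∈ P' ∨ (r.natDegree < M ∧
      ((∃ p ∈ myF14 P' M (M - r.natDegree - 1), r = derivative p) ∨
      ∃ p ∈ myF14 P' M (M - r.natDegree - 1), ∃ q ∈ myF14 P' M (M - r.natDegree - 1), r = p % q))) :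
    r ∈ myF14 P' M (M - r.natDegree) := by
  rcases Nat.eq_zero_or_pos (M - r.natDegree) with h0 | h0
  · -- r.natDegree = M, stage 0
    have hM : r.natDegree = M := by omega
    rw [h0]
    refine (mem_myStep14 P' ∅ M r).mpr (Or.inr ⟨hr, hM, ?_⟩)
    rcases h with h | ⟨hlt, _⟩
    · exact Or.inl h
    · omega
  · obtain ⟨k, hk⟩ : ∃ k, M - r.natDegree = k + 1 := ⟨M - r.natDegree - 1, by omega⟩
    rw [hk]
    have hkk : M - r.natDegree - 1 = k := by omega
    rw [hkk] at h
    refine (mem_myStep14 P' (myF14 P' M k) (M - (k+1)) r).mpr (Or.inr ⟨hr, by omega, ?_⟩)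
    rcases h with h | ⟨_, h⟩
    · exact Or.inl h
    · exact Or.inr h

theorem stmt14 (P : Set (Polynomial ℚ)) (hP : P.Finite) :
    ∃ Q : Set (Polynomial ℚ), Q.Finite ∧ P ⊆ Q ∧
      (∀ p ∈ Q, derivative p ∈ Q) ∧
      (∀ p ∈ Q, ∀ q ∈ Q, q ≠ 0 → p % q ∈ Q) := by
  classical
  set P' := hP.toFinset with hP'
  set M := P'.sup Polynomial.natDegree with hM
  refine ⟨↑(myF14 P' M M) ∪ {0}, (Finset.finite_toSet _).union (Set.finite_singleton 0), ?_, ?_, ?_⟩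
  · intro p hp
    by_cases h0 : p = 0
    · exact Or.inr h0
    · have hp' : p ∈ P' := hP.mem_toFinset.mpr hp
      have hd : p.natDegree ≤ M := Finset.le_sup hp'
      have := myF14_ins P' M p h0 hd (Or.inl hp')
      exact Or.inl (myF14_mono P' M (Nat.sub_le M _) this)
  · rintro p (hp | hp)
    · -- p ∈ F M
      obtain ⟨h1, h2, h3, h4⟩ := myF14_inv P' M M le_rfl p hp
      by_cases hn : p.natDegree = 0
      · have : derivative p = 0 := by
          obtain ⟨c, rfl⟩ := Polynomial.natDegree_eq_zero.mp hn
          simp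
        rw [this]; exact Or.inr rfl
      · have hdeg : (derivative p).degree = (p.natDegree - 1 : ℕ) :=
          Polynomial.degree_derivative_eq p (Nat.pos_of_ne_zero hn)
        have hne : derivative p ≠ 0 := by
          intro h; rw [h, Polynomial.degree_zero] at hdeg; exact absurd hdeg (by simp)
        have hnd : (derivative p).natDegree = p.natDegree - 1 :=
          Polynomial.natDegree_eq_of_degree_eq_some hdeg
        have hdle : (derivative p).natDegree ≤ M := by omega
        have hstage : M - (derivative p).natDegree - 1 ≥ M - p.natDegree := by omega
        have hins := myF14_ins P' M (derivative p) hne hdle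
          (Or.inr ⟨by omega, Or.inl ⟨p, myF14_mono P' M hstage h4, rfl⟩⟩)
        exact Or.inl (myF14_mono P' M (Nat.sub_le M _) hins)
    · simp only [Set.mem_singleton_iff] at hp
      rw [hp, Polynomial.derivative_zero]; exact Or.inr rfl
  · rintro p (hp | hp) q (hq | hq) hq0
    · obtain ⟨hp1, hp2, hp3, hp4⟩ := myF14_inv P' M M le_rfl p hp
      obtain ⟨hq1, hq2, hq3, hq4⟩ := myF14_inv P' M M le_rfl q hq
      rcases lt_or_ge p.degree q.degree with hlt | hle
      · rw [(Polynomial.mod_eq_self_iff hq0).mpr hlt]; exact Or.inl hp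
      · set r := p % q with hr
        by_cases hr0 : r = 0
        · exact Or.inr hr0
        · have hdlt : r.degree < q.degree := EuclideanDomain.mod_lt p hq0
          have hnlt : r.natDegree < q.natDegree := by
            have := Polynomial.natDegree_lt_natDegree hr0 hdlt
            exact this
          have hnpq : q.natDegree ≤ p.natDegree := Polynomial.natDegree_le_natDegree hle
          have hstage_p : M - p.natDegree ≤ M - r.natDegree - 1 := by omega
          have hstage_q : M - q.natDegree ≤ M - r.natDegree - 1 := by omega
          have hins := myF14_ins P' M r hr0 (by omega)
            (Or.inr ⟨by omega, Or.inr ⟨p, myF14_mono P' M hstage_p hp4, q,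
              myF14_mono P' M hstage_q hq4, rfl⟩⟩)
          exact Or.inl (myF14_mono P' M (Nat.sub_le M _) hins)
    · simp only [Set.mem_singleton_iff] at hq; exact absurd hq hq0
    · simp only [Set.mem_singleton_iff] at hp
      rw [hp, EuclideanDomain.zero_mod]; exact Or.inr rfl
    · simp only [Set.mem_singleton_iff] at hq; exact absurd hq hq0
end

section
/- Let x₁, …, x_m be points in ℝ², let i, j, k ∈ {1, …, m} be indices such that x_i, x_j, x_k are affinely independent, and let ρ, σ ∈ {−1, +1}. For ε > 0 set x(ε) = x_i + ρ·ε·(x_j − x_i) + σ·ε²·(x_k − x_i). Then there exists ε₀ > 0 such that for all ε, ε′ ∈ (0, ε₀) and all a, b ∈ {1, …, m}, the orientation sign of the triple (x(ε), x_a, x_b) equals the orientation sign of the triple (x(ε′), x_a, x_b); i.e., the order type of the extended point sequence is the same for all sufficiently small ε > 0. -/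
/-- The orientation sign of an ordered triple of points in the plane:
the sign of the determinant of the matrix with rows `q - p` and `r - p`. -/
noncomputable def oriSign (p q r : ℝ × ℝ) : SignType :=
  SignType.sign ((q.1 - p.1) * (r.2 - p.2) - (q.2 - p.2) * (r.1 - p.1))

lemma sign_add_of_abs_lt {x y : ℝ} (h : |y| < |x|) :
    SignType.sign (x + y) = SignType.sign x := by
  rcases abs_lt.mp h with ⟨h1, h2⟩
  rcases lt_trichotomy x 0 with hx | hx | hx
  · have hxy : x + y < 0 := by
      rcases abs_cases x with ⟨hc, _⟩ | ⟨hc, _⟩ <;> nlinarith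
    rw [sign_neg hx, sign_neg hxy]
  · rw [hx, abs_zero] at h; exact absurd h (abs_nonneg y).not_gt
  · have hxy : 0 < x + y := by
      rcases abs_cases x with ⟨hc, _⟩ | ⟨hc, _⟩ <;> nlinarith
    rw [sign_pos hx, sign_pos hxy]

lemma sign_poly_const (c0 c1 c2 : ℝ) :
    ∃ ε₀ : ℝ, 0 < ε₀ ∧ ∃ s : SignType, ∀ ε : ℝ, 0 < ε → ε < ε₀ →
      SignType.sign (c0 + c1 * ε + c2 * ε ^ 2) = s := by
  by_cases h0 : c0 = 0
  · by_cases h1 : c1 = 0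
    · refine ⟨1, one_pos, SignType.sign c2, fun ε hε _ => ?_⟩
      have : c0 + c1 * ε + c2 * ε ^ 2 = c2 * ε ^ 2 := by rw [h0, h1]; ring
      rw [this, sign_mul, sign_pos (by positivity : (0:ℝ) < ε ^ 2), mul_one]
    · refine ⟨min 1 (|c1| / (|c2| + 1)), lt_min one_pos (by positivity), SignType.sign c1,
        fun ε hε hε' => ?_⟩
      have hε1 : ε < 1 := lt_of_lt_of_le hε' (min_le_left _ _)
      have hε2 : ε < |c1| / (|c2| + 1) := lt_of_lt_of_le hε' (min_le_right _ _)
      have hεb : ε * (|c2| + 1) < |c1| :=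
        (lt_div_iff₀ (by positivity : (0:ℝ) < |c2| + 1)).mp hε2
      have hlt : |c2 * ε| < |c1| := by
        rw [abs_mul, abs_of_pos hε]
        nlinarith [abs_nonneg c2]
      have : c0 + c1 * ε + c2 * ε ^ 2 = ε * (c1 + c2 * ε) := by rw [h0]; ring
      rw [this, sign_mul, sign_pos hε, one_mul, sign_add_of_abs_lt hlt]
  · refine ⟨min 1 (|c0| / (|c1| + |c2| + 1)), lt_min one_pos (by positivity), SignType.sign c0,
      fun ε hε hε' => ?_⟩
    have hε1 : ε < 1 := lt_of_lt_of_le hε' (min_le_left _ _)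
    have hε2 : ε < |c0| / (|c1| + |c2| + 1) := lt_of_lt_of_le hε' (min_le_right _ _)
    have hεb : ε * (|c1| + |c2| + 1) < |c0| :=
      (lt_div_iff₀ (by positivity : (0:ℝ) < |c1| + |c2| + 1)).mp hε2
    have hlt : |c1 * ε + c2 * ε ^ 2| < |c0| := by
      calc |c1 * ε + c2 * ε ^ 2| ≤ |c1 * ε| + |c2 * ε ^ 2| := abs_add_le _ _
        _ = |c1| * ε + |c2| * ε ^ 2 := by
            rw [abs_mul, abs_mul, abs_of_pos hε, abs_of_pos (by positivity : (0:ℝ) < ε ^ 2)]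
        _ < |c0| := by
            nlinarith [abs_nonneg c1, abs_nonneg c2,
              mul_nonneg (abs_nonneg c2) (mul_nonneg hε.le (sub_nonneg.mpr hε1.le))]
    rw [show c0 + c1 * ε + c2 * ε ^ 2 = c0 + (c1 * ε + c2 * ε ^ 2) by ring,
      sign_add_of_abs_lt hlt]

theorem stmt19 (m : ℕ) (x : Fin m → ℝ × ℝ) (i j k : Fin m)
    (hindep : AffineIndependent ℝ ![x i, x j, x k])
    (ρ σ : ℝ) (hρ : ρ = 1 ∨ ρ = -1) (hσ : σ = 1 ∨ σ = -1) :
    ∃ ε₀ : ℝ, 0 < ε₀ ∧ ∀ ε ε' : ℝ, 0 < ε → ε < ε₀ → 0 < ε' → ε' < ε₀ →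
      ∀ a b : Fin m,
        oriSign (x i + (ρ * ε) • (x j - x i) + (σ * ε ^ 2) • (x k - x i)) (x a) (x b) =
        oriSign (x i + (ρ * ε') • (x j - x i) + (σ * ε' ^ 2) • (x k - x i)) (x a) (x b) := by
  classical
  have key : ∀ p : Fin m × Fin m, ∃ ε₀ : ℝ, 0 < ε₀ ∧ ∀ ε ε' : ℝ,
      0 < ε → ε < ε₀ → 0 < ε' → ε' < ε₀ →
      oriSign (x i + (ρ * ε) • (x j - x i) + (σ * ε ^ 2) • (x k - x i)) (x p.1) (x p.2) =
      oriSign (x i + (ρ * ε') • (x j - x i) + (σ * ε' ^ 2) • (x k - x i)) (x p.1) (x p.2) := by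
    rintro ⟨a, b⟩
    set p := x i with hp
    set q := x a with hq
    set r := x b with hr
    set v := x j - x i with hv
    set w := x k - x i with hw
    set c0 : ℝ := q.1 * r.2 - q.2 * r.1 - p.1 * (r.2 - q.2) + p.2 * (r.1 - q.1) with hc0
    set c1 : ℝ := ρ * (-(v.1) * (r.2 - q.2) + v.2 * (r.1 - q.1)) with hc1
    set c2 : ℝ := σ * (-(w.1) * (r.2 - q.2) + w.2 * (r.1 - q.1)) with hc2
    have hform : ∀ ε : ℝ,
        oriSign (p + (ρ * ε) • v + (σ * ε ^ 2) • w) q r =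
        SignType.sign (c0 + c1 * ε + c2 * ε ^ 2) := by
      intro ε
      unfold oriSign
      congr 1
      simp only [Prod.fst_add, Prod.snd_add, Prod.smul_fst, Prod.smul_snd, smul_eq_mul,
        hc0, hc1, hc2]
      ring
    obtain ⟨ε₀, hε₀, s, hs⟩ := sign_poly_const c0 c1 c2
    exact ⟨ε₀, hε₀, fun ε ε' h1 h2 h3 h4 => by
      rw [hform ε, hform ε', hs ε h1 h2, hs ε' h3 h4]⟩
  choose F hF1 hF2 using key
  rcases Nat.eq_zero_or_pos m with hm | hm
  · subst hm
    exact ⟨1, one_pos, fun ε ε' _ _ _ _ a => absurd a.2 (by omega)⟩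
  · have hne : (Finset.univ : Finset (Fin m × Fin m)).Nonempty :=
      ⟨(⟨0, hm⟩, ⟨0, hm⟩), Finset.mem_univ _⟩
    refine ⟨Finset.univ.inf' hne F, ?_, ?_⟩
    · rw [Finset.lt_inf'_iff]
      exact fun b _ => hF1 b
    · intro ε ε' h1 h2 h3 h4 a b
      exact hF2 (a, b) ε ε' h1
        (lt_of_lt_of_le h2 (Finset.inf'_le F (Finset.mem_univ _)))
        h3 (lt_of_lt_of_le h4 (Finset.inf'_le F (Finset.mem_univ _)))
end
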